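/- Let n ∈ ℕ, n−1 < α ≤ n, a, λ₂ ∈ ℝ, set λ = a(a+λ₂), and let c_{k,1}, c_{k,2} ∈ ℝ for k = 1,…,n. Define for t > 0: φ(t) = Σ_{k=1}^n c_{k,1} t^{α−k} E_{2α,1+α−k}(λ t^{2α}) + a Σ_{k=1}^n c_{k,2} t^{2α−k} E_{2α,1+2α−k}(λ t^{2α}) and ψ(t) = (a+λ₂) Σ_{k=1}^n c_{k,1} t^{2α−k} E_{2α,1+2α−k}(λ t^{2α}) + Σ_{k=1}^n c_{k,2} t^{α−k} E_{2α,1+α−k}(λ t^{2α}). Then for all t > 0: (d^α/dt^α)φ(t) = a ψ(t) and (d^α/dt^α)ψ(t) = (a+λ₂) φ(t). -/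

import Mathlib

open MeasureTheory Real Set

noncomputable section

/-- The Riemann–Liouville kernel: for `α = n` it is `h` itself; for `n - 1 < α < n`
it is the fractional integral of order `n - α` of `h`. -/
def rlKernel (n : ℕ) (α : ℝ) (h : ℝ → ℝ) : ℝ → ℝ :=
  if α = (n : ℝ) then h
  else fun t => (Real.Gamma ((n : ℝ) - α))⁻¹ *
    ∫ s in (0:ℝ)..t, h s * (t - s) ^ ((n : ℝ) - α - 1)

/-- The Riemann–Liouville fractional derivative of order `α` (with `n - 1 < α ≤ n`). -/
def rlDeriv (n : ℕ) (α : ℝ) (h : ℝ → ℝ) : ℝ → ℝ :=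
  iteratedDeriv n (rlKernel n α h)

/-- The Riemann–Liouville derivative of order `α` of `h` exists on `(0, ∞)`. -/
def HasRLDerivOn (n : ℕ) (α : ℝ) (h : ℝ → ℝ) : Prop :=
  ContDiffOn ℝ n (rlKernel n α h) (Set.Ioi 0)

/-- The two-parameter Mittag–Leffler function `E_{ρ,b}(z) = Σ_{j≥0} z^j / Γ(ρj + b)`,
with the convention that `1/Γ` vanishes at the poles of `Γ` (Mathlib's `Real.Gamma`
is `0` there). -/
def mittagLeffler (ρ b z : ℝ) : ℝ :=
  ∑' j : ℕ, z ^ j / Real.Gamma (ρ * j + b)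

namespace MLaux

def H (ρ lam b t : ℝ) : ℝ :=
  ∑' j : ℕ, lam ^ j * t ^ (ρ * j + b - 1) * (Real.Gamma (ρ * j + b))⁻¹

theorem gamma_inv_step (c : ℝ) :
    (c - 1) * (Real.Gamma c)⁻¹ = (Real.Gamma (c - 1))⁻¹ := by
  by_cases h : ∃ m : ℕ, c - 1 = -(m : ℝ)
  · obtain ⟨m, hm⟩ := h
    have hrhs : (Real.Gamma (c - 1))⁻¹ = 0 := by
      rw [hm, Real.Gamma_neg_nat_eq_zero, inv_zero]
    rw [hrhs]
    match m, hm with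
    | 0, hm => rw [show c - 1 = 0 by simpa using hm]; ring
    | (m + 1), hm =>
      have hc : c = -(m : ℝ) := by push_cast at hm; linarith
      rw [hc, Real.Gamma_neg_nat_eq_zero, inv_zero]; ring
  · have h0 : c - 1 ≠ 0 := by
      intro h1; exact h ⟨0, by simpa using h1⟩
    have hG : Real.Gamma c = (c - 1) * Real.Gamma (c - 1) := by
      have := Real.Gamma_add_one h0
      rwa [sub_add_cancel] at this
    rw [hG, mul_inv]
    rw [← mul_assoc, mul_inv_cancel₀ h0, one_mul]

theorem Gamma_lower {c : ℝ} (x : ℝ) (hc : 0 < c) (hx : 1 ≤ x) :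
    c ^ (x - 1) * Real.exp (-c) ≤ Real.Gamma x := by
  have hx0 : 0 < x := lt_of_lt_of_le one_pos hx
  rw [Real.Gamma_eq_integral hx0]
  have h1 : c ^ (x - 1) * Real.exp (-c)
      = ∫ s in Ioi c, Real.exp (-s) * c ^ (x - 1) := by
    rw [integral_mul_const, integral_exp_neg_Ioi]; ring
  rw [h1]
  have hint : IntegrableOn (fun s : ℝ => Real.exp (-s) * s ^ (x - 1)) (Ioi c) := by
    exact (Real.GammaIntegral_convergent hx0).mono_set (Ioi_subset_Ioi hc.le)
  have hint2 : IntegrableOn (fun s : ℝ => Real.exp (-s) * c ^ (x - 1)) (Ioi c) := by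
    have : IntegrableOn (fun s : ℝ => Real.exp (-s)) (Ioi c) := by
      simpa using exp_neg_integrableOn_Ioi c one_pos
    exact this.mul_const _
  calc ∫ s in Ioi c, Real.exp (-s) * c ^ (x - 1)
      ≤ ∫ s in Ioi c, Real.exp (-s) * s ^ (x - 1) := by
        refine setIntegral_mono_on hint2 hint measurableSet_Ioi fun s hs => ?_
        exact mul_le_mul_of_nonneg_left
          (Real.rpow_le_rpow hc.le (le_of_lt hs) (by linarith)) (Real.exp_pos _).le
    _ ≤ ∫ s in Ioi 0, Real.exp (-s) * s ^ (x - 1) := by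
        refine setIntegral_mono_set (Real.GammaIntegral_convergent hx0) ?_ ?_
        · filter_upwards [self_mem_ae_restrict measurableSet_Ioi] with s hs
          have : (0:ℝ) < s := hs
          positivity
        · exact HasSubset.Subset.eventuallyLE (Ioi_subset_Ioi hc.le)

theorem rpow_le_max {l u x : ℝ} (hl : 0 < l) (h1 : l ≤ x) (h2 : x ≤ u) (e : ℝ) :
    x ^ e ≤ max (l ^ e) (u ^ e) := by
  rcases le_or_gt 0 e with he | he
  · exact le_max_of_le_right (Real.rpow_le_rpow (hl.le.trans h1) h2 he)
  · exact le_max_of_le_left (Real.rpow_le_rpow_of_nonpos hl h1 he.le)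

theorem summable_weight (ρ b r : ℝ) (hρ : 0 < ρ) (hr : 0 ≤ r) :
    Summable fun j : ℕ => (ρ * j + |b| + 1) * r ^ j * |(Real.Gamma (ρ * j + b))⁻¹| := by
  set c : ℝ := max 1 ((2 * r + 2) ^ ρ⁻¹) with hcdef
  have hc1 : (1:ℝ) ≤ c := le_max_left _ _
  have hc0 : (0:ℝ) < c := lt_of_lt_of_le one_pos hc1
  have hcρ : 2 * r + 2 ≤ c ^ ρ := by
    calc 2 * r + 2 = ((2 * r + 2) ^ ρ⁻¹) ^ ρ := by
          rw [← Real.rpow_mul (by positivity), inv_mul_cancel₀ hρ.ne', Real.rpow_one]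
      _ ≤ c ^ ρ := Real.rpow_le_rpow (by positivity) (le_max_right _ _) hρ.le
  have hcρ0 : (0:ℝ) < c ^ ρ := by positivity
  set q : ℝ := r / c ^ ρ with hqdef
  have hq0 : 0 ≤ q := by positivity
  have hq1 : q < 1 := by
    rw [hqdef, div_lt_one hcρ0]; linarith
  have hmaj : Summable fun j : ℕ =>
      (Real.exp c * c ^ (1 - b)) * ((ρ * j + |b| + 1) * q ^ j) := by
    apply Summable.mul_left
    have h1 : Summable fun j : ℕ => (j : ℝ) * q ^ j := by
      simpa using summable_pow_mul_geometric_of_norm_lt_one 1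
        (r := q) (by rwa [Real.norm_of_nonneg hq0])
    have h2 : Summable fun j : ℕ => q ^ j := summable_geometric_of_lt_one hq0 hq1
    exact Summable.congr ((h1.mul_left ρ).add (h2.mul_left (|b| + 1)))
      (fun j => by ring)
  refine Summable.of_norm_bounded_eventually_nat hmaj ?_
  rw [Filter.eventually_atTop]
  refine ⟨⌈(|b| + 1) / ρ⌉₊, fun j hj => ?_⟩
  have hjρ : |b| + 1 ≤ ρ * j := by
    have h1 : ((|b| + 1) / ρ) ≤ (j : ℝ) :=
      le_trans (Nat.le_ceil _) (by exact_mod_cast hj)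
    calc |b| + 1 = ((|b| + 1) / ρ) * ρ := by field_simp
      _ ≤ (j : ℝ) * ρ := mul_le_mul_of_nonneg_right h1 hρ.le
      _ = ρ * j := by ring
  have harg : 1 ≤ ρ * j + b := by
    have := neg_abs_le b; linarith
  have hgpos : 0 < c ^ (ρ * j + b - 1) * Real.exp (-c) := by positivity
  have hΓ := Gamma_lower (c := c) (ρ * j + b) hc0 harg
  have hΓpos : 0 < Real.Gamma (ρ * j + b) := lt_of_lt_of_le hgpos hΓ
  have hbound : |(Real.Gamma (ρ * j + b))⁻¹| ≤ (c ^ (ρ * j + b - 1) * Real.exp (-c))⁻¹ := by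
    rw [abs_of_pos (inv_pos.2 hΓpos)]
    exact inv_anti₀ hgpos hΓ
  have hnn : (0:ℝ) ≤ (ρ * j + |b| + 1) * r ^ j := by positivity
  rw [Real.norm_of_nonneg (by positivity)]
  calc (ρ * j + |b| + 1) * r ^ j * |(Real.Gamma (ρ * j + b))⁻¹|
      ≤ (ρ * j + |b| + 1) * r ^ j * (c ^ (ρ * j + b - 1) * Real.exp (-c))⁻¹ :=
        mul_le_mul_of_nonneg_left hbound hnn
    _ = (Real.exp c * c ^ (1 - b)) * ((ρ * j + |b| + 1) * q ^ j) := by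
        rw [show ρ * (j:ℝ) + b - 1 = ρ * j + (b - 1) by ring, Real.rpow_add hc0,
          Real.rpow_mul hc0.le, Real.rpow_natCast, hqdef, div_pow, Real.exp_neg,
          show (1:ℝ) - b = -(b-1) by ring, Real.rpow_neg hc0.le]
        field_simp

theorem summable_H (ρ lam b : ℝ) (hρ : 0 < ρ) {t : ℝ} (ht : 0 < t) :
    Summable fun j : ℕ => lam ^ j * t ^ (ρ * j + b - 1) * (Real.Gamma (ρ * j + b))⁻¹ := by
  refine Summable.of_norm_bounded
    (((summable_weight ρ b (|lam| * t ^ ρ) hρ (by positivity))).mul_left (t ^ (b - 1))) ?_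
  intro j
  rw [Real.norm_eq_abs, abs_mul, abs_mul, abs_pow]
  have h1 : |t ^ (ρ * (j:ℝ) + b - 1)| = (t ^ ρ) ^ j * t ^ (b - 1) := by
    rw [abs_of_nonneg (Real.rpow_nonneg ht.le _),
      show ρ * (j:ℝ) + b - 1 = ρ * j + (b - 1) by ring, Real.rpow_add ht,
      Real.rpow_mul ht.le, Real.rpow_natCast]
  rw [h1]
  have h2 : (1:ℝ) ≤ ρ * j + |b| + 1 := by
    have h3 : (0:ℝ) ≤ ρ * j := by positivity
    have h4 := abs_nonneg b
    linarith
  calc |lam| ^ j * ((t ^ ρ) ^ j * t ^ (b - 1)) * |(Real.Gamma (ρ * j + b))⁻¹|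
      = (t ^ (b - 1) * ((|lam| * t ^ ρ) ^ j * |(Real.Gamma (ρ * j + b))⁻¹|)) * 1 := by
        rw [mul_pow]; ring
    _ ≤ (t ^ (b - 1) * ((|lam| * t ^ ρ) ^ j * |(Real.Gamma (ρ * j + b))⁻¹|)) * (ρ * j + |b| + 1) := by
        refine mul_le_mul_of_nonneg_left h2 (by positivity)
    _ = t ^ (b - 1) * ((ρ * j + |b| + 1) * (|lam| * t ^ ρ) ^ j * |(Real.Gamma (ρ * j + b))⁻¹|) := by
        ring


theorem H_eq (ρ lam b : ℝ) {t : ℝ} (ht : 0 < t) :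
    t ^ (b - 1) * mittagLeffler ρ b (lam * t ^ ρ) = H ρ lam b t := by
  rw [mittagLeffler, H, ← tsum_mul_left]
  refine tsum_congr fun j => ?_
  rw [div_eq_mul_inv, mul_pow,
    show ρ * (j:ℝ) + b - 1 = ρ * j + (b - 1) by ring, Real.rpow_add ht,
    Real.rpow_mul ht.le, Real.rpow_natCast]
  ring

theorem hasDerivAt_H (ρ lam b : ℝ) (hρ : 0 < ρ) {t : ℝ} (ht : 0 < t) :
    HasDerivAt (H ρ lam b) (H ρ lam (b - 1) t) t := by
  have hl : (0:ℝ) < t / 2 := by linarith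
  have hlt : t / 2 < t := by linarith
  have htu : t < t + 1 := by linarith
  set m : ℝ := max ((t / 2) ^ (b - 2)) ((t + 1) ^ (b - 2)) with hmdef
  have hm0 : 0 ≤ m := le_trans (Real.rpow_nonneg hl.le _) (le_max_left _ _)
  set r : ℝ := |lam| * (t + 1) ^ ρ with hrdef
  have hr0 : 0 ≤ r := by positivity
  have hu : Summable fun j : ℕ =>
      m * ((ρ * j + |b - 1| + 1) * r ^ j * |(Real.Gamma (ρ * j + (b - 1)))⁻¹|) :=
    (summable_weight ρ (b - 1) r hρ hr0).mul_left m
  have hmem : t ∈ Ioo (t / 2) (t + 1) := ⟨hlt, htu⟩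
  have key := hasDerivAt_tsum_of_isPreconnected hu (isOpen_Ioo (a := t/2) (b := t+1))
    (isPreconnected_Ioo)
    (g := fun (j : ℕ) (x : ℝ) => lam ^ j * x ^ (ρ * j + b - 1) * (Real.Gamma (ρ * j + b))⁻¹)
    (g' := fun (j : ℕ) (x : ℝ) => lam ^ j * x ^ (ρ * j + (b - 1) - 1) * (Real.Gamma (ρ * j + (b - 1)))⁻¹)
    ?_ ?_ hmem ?_ hmem
  · exact key
  · -- derivatives
    intro j x hx
    have hx0 : (0:ℝ) < x := lt_trans hl hx.1
    have h := ((Real.hasDerivAt_rpow_const (x := x) (p := ρ * j + b - 1)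
      (Or.inl hx0.ne')).const_mul (lam ^ j)).mul_const ((Real.Gamma (ρ * j + b))⁻¹)
    convert h using 1
    show lam ^ j * x ^ (ρ * (j:ℝ) + (b - 1) - 1) * (Real.Gamma (ρ * (j:ℝ) + (b - 1)))⁻¹
      = lam ^ j * ((ρ * (j:ℝ) + b - 1) * x ^ (ρ * (j:ℝ) + b - 1 - 1)) * (Real.Gamma (ρ * (j:ℝ) + b))⁻¹
    rw [show ρ * (j:ℝ) + (b - 1) = ρ * j + b - 1 by ring, ← gamma_inv_step (ρ * j + b)]
    ring
    rfl
  · -- bounds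
    intro j x hx
    have hx0 : (0:ℝ) < x := lt_trans hl hx.1
    rw [Real.norm_eq_abs, abs_mul, abs_mul, abs_pow,
      abs_of_nonneg (Real.rpow_nonneg hx0.le _)]
    have hsplit : x ^ (ρ * (j:ℝ) + (b - 1) - 1) = x ^ (ρ * (j:ℝ)) * x ^ (b - 2) := by
      rw [← Real.rpow_add hx0]; ring_nf
    have h1 : x ^ (ρ * (j:ℝ)) ≤ ((t + 1) ^ ρ) ^ j := by
      rw [← Real.rpow_natCast ((t+1) ^ ρ) j, ← Real.rpow_mul (by linarith : (0:ℝ) ≤ t + 1)]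
      exact Real.rpow_le_rpow hx0.le hx.2.le (by positivity)
    have h2 : x ^ (b - 2) ≤ m := rpow_le_max hl hx.1.le hx.2.le _
    have h3 : x ^ (ρ * (j:ℝ) + (b - 1) - 1) ≤ ((t + 1) ^ ρ) ^ j * m := by
      rw [hsplit]
      exact mul_le_mul h1 h2 (Real.rpow_nonneg hx0.le _) (by positivity)
    calc |lam| ^ j * x ^ (ρ * (j:ℝ) + (b - 1) - 1) * |(Real.Gamma (ρ * j + (b - 1)))⁻¹|
        ≤ |lam| ^ j * (((t + 1) ^ ρ) ^ j * m) * |(Real.Gamma (ρ * j + (b - 1)))⁻¹| := by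
          refine mul_le_mul_of_nonneg_right (mul_le_mul_of_nonneg_left h3 (by positivity))
            (abs_nonneg _)
      _ = m * (1 * r ^ j * |(Real.Gamma (ρ * j + (b - 1)))⁻¹|) := by
          rw [hrdef, mul_pow]; ring
      _ ≤ m * ((ρ * j + |b - 1| + 1) * r ^ j * |(Real.Gamma (ρ * j + (b - 1)))⁻¹|) := by
          refine mul_le_mul_of_nonneg_left ?_ hm0
          refine mul_le_mul_of_nonneg_right (mul_le_mul_of_nonneg_right ?_ (by positivity))
            (abs_nonneg _)
          have h4 : (0:ℝ) ≤ ρ * j := by positivity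
          have h5 := abs_nonneg (b - 1)
          linarith
  · exact summable_H ρ lam b hρ ht

theorem eventuallyEq_iteratedDeriv {f g : ℝ → ℝ} {x : ℝ} (h : f =ᶠ[nhds x] g) (m : ℕ) :
    iteratedDeriv m f =ᶠ[nhds x] iteratedDeriv m g := by
  induction m with
  | zero => simpa [iteratedDeriv_zero] using h
  | succ m ih => rw [iteratedDeriv_succ, iteratedDeriv_succ]; exact ih.deriv

theorem iteratedDeriv_combo {ι : Type} (C : Finset ι) (w : ι → ℝ) (ρ lam : ℝ)
    (hρ : 0 < ρ) (m : ℕ) :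
    ∀ (bf : ι → ℝ) (t : ℝ), 0 < t →
      iteratedDeriv m (fun x => ∑ i ∈ C, w i * H ρ lam (bf i) x) t
      = ∑ i ∈ C, w i * H ρ lam (bf i - m) t := by
  induction m with
  | zero => intro bf t ht; simp [iteratedDeriv_zero]
  | succ m ih =>
    intro bf t ht
    rw [iteratedDeriv_succ']
    have hev : deriv (fun x => ∑ i ∈ C, w i * H ρ lam (bf i) x) =ᶠ[nhds t]
        (fun x => ∑ i ∈ C, w i * H ρ lam (bf i - 1) x) := by
      filter_upwards [isOpen_Ioi.mem_nhds ht] with x hx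
      exact (HasDerivAt.fun_sum fun i _ =>
        (hasDerivAt_H ρ lam (bf i) hρ hx).const_mul (w i)).deriv
    rw [(eventuallyEq_iteratedDeriv hev m).eq_of_nhds, ih (fun i => bf i - 1) t ht]
    refine Finset.sum_congr rfl fun i _ => ?_
    have : bf i - 1 - (m:ℝ) = bf i - ((m:ℕ) + 1 : ℕ) := by push_cast; ring
    rw [this]

theorem H_shift (ρ lam : ℝ) (hρ : 0 < ρ) (k : ℕ) (hk : 1 ≤ k) {t : ℝ} (ht : 0 < t) :
    H ρ lam (1 - k) t = lam * H ρ lam (1 + ρ - k) t := by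
  rw [H, Summable.tsum_eq_zero_add (summable_H ρ lam (1 - k) hρ ht)]
  have h0 : lam ^ (0:ℕ) * t ^ (ρ * ((0:ℕ):ℝ) + (1 - (k:ℝ)) - 1) *
      (Real.Gamma (ρ * ((0:ℕ):ℝ) + (1 - (k:ℝ))))⁻¹ = 0 := by
    have harg : ρ * ((0:ℕ):ℝ) + (1 - (k:ℝ)) = -(((k - 1 : ℕ)):ℝ) := by
      push_cast [hk]; ring
    rw [harg, Real.Gamma_neg_nat_eq_zero, inv_zero, mul_zero]
  rw [h0, zero_add, H, ← tsum_mul_left]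
  refine tsum_congr fun j => ?_
  have h1 : ρ * ((j:ℝ) + 1) + (1 - (k:ℝ)) - 1 = ρ * j + (1 + ρ - k) - 1 := by ring
  have h2 : ρ * ((j:ℝ) + 1) + (1 - (k:ℝ)) = ρ * j + (1 + ρ - k) := by ring
  push_cast
  rw [h1, h2]
  ring


theorem beta_real {p q t : ℝ} (hp : 0 < p) (hq : 0 < q) (ht : 0 < t) :
    ∫ s in (0:ℝ)..t, s ^ (p - 1) * (t - s) ^ (q - 1)
      = Real.Gamma p * Real.Gamma q * (Real.Gamma (p + q))⁻¹ * t ^ (p + q - 1) := by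
  have hC : (∫ s in (0:ℝ)..t, (s:ℂ) ^ ((p:ℂ) - 1) * ((t:ℂ) - s) ^ ((q:ℂ) - 1))
      = (t:ℂ) ^ ((p:ℂ) + q - 1) * Complex.betaIntegral p q :=
    Complex.betaIntegral_scaled _ _ ht
  have hG : Complex.Gamma p * Complex.Gamma q
      = Complex.Gamma ((p:ℂ) + q) * Complex.betaIntegral p q := by
    exact Complex.Gamma_mul_Gamma_eq_betaIntegral (by simpa using hp) (by simpa using hq)
  have hne : Complex.Gamma ((p:ℂ) + q) ≠ 0 := by
    rw [show ((p:ℂ) + q) = ((p + q : ℝ) : ℂ) by push_cast; ring, Complex.Gamma_ofReal]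
    exact_mod_cast (Real.Gamma_pos_of_pos (by positivity)).ne'
  have hbeta : Complex.betaIntegral p q
      = Complex.Gamma p * Complex.Gamma q / Complex.Gamma ((p:ℂ) + q) := by
    rw [eq_div_iff hne, mul_comm (Complex.betaIntegral _ _)]
    exact hG.symm
  have hreal : (∫ s in (0:ℝ)..t, (s:ℂ) ^ ((p:ℂ) - 1) * ((t:ℂ) - s) ^ ((q:ℂ) - 1))
      = ((∫ s in (0:ℝ)..t, s ^ (p - 1) * (t - s) ^ (q - 1) : ℝ) : ℂ) := by
    have hOR : (∫ x in Ioc (0:ℝ) t, ((x ^ (p - 1) * (t - x) ^ (q - 1) : ℝ) : ℂ))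
        = ((∫ x in Ioc (0:ℝ) t, x ^ (p - 1) * (t - x) ^ (q - 1) : ℝ) : ℂ) := integral_ofReal
    rw [intervalIntegral.integral_of_le ht.le, intervalIntegral.integral_of_le ht.le, ← hOR]
    refine setIntegral_congr_fun measurableSet_Ioc fun x hx => ?_
    rw [Complex.ofReal_mul, Complex.ofReal_cpow hx.1.le, Complex.ofReal_cpow
      (sub_nonneg.2 hx.2)]
    push_cast
    ring
  have hfinal : ((∫ s in (0:ℝ)..t, s ^ (p - 1) * (t - s) ^ (q - 1) : ℝ) : ℂ)
      = ((Real.Gamma p * Real.Gamma q * (Real.Gamma (p + q))⁻¹ * t ^ (p + q - 1) : ℝ) : ℂ) := by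
    rw [← hreal, hC, hbeta,
      show ((p:ℂ) + q - 1) = ((p + q - 1 : ℝ) : ℂ) by push_cast; ring,
      ← Complex.ofReal_cpow ht.le,
      show ((p:ℂ) + q) = ((p + q : ℝ) : ℂ) by push_cast; ring,
      show ((p:ℂ)) = ((p : ℝ) : ℂ) by norm_cast,
      show ((q:ℂ)) = ((q : ℝ) : ℂ) by norm_cast,
      Complex.Gamma_ofReal, Complex.Gamma_ofReal, Complex.Gamma_ofReal]
    push_cast
    ring
  exact_mod_cast hfinal

theorem beta_integrableOn {p q t : ℝ} (hp : 0 < p) (hq : 0 < q) (ht : 0 < t) :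
    IntegrableOn (fun s : ℝ => s ^ (p - 1) * (t - s) ^ (q - 1)) (Ioc 0 t) := by
  have hmeas : Measurable (fun s : ℝ => s ^ (p - 1) * (t - s) ^ (q - 1)) := by fun_prop
  have hsplit : Ioc (0:ℝ) t = Ioc 0 (t/2) ∪ Ioc (t/2) t :=
    (Set.Ioc_union_Ioc_eq_Ioc (by linarith) (by linarith)).symm
  rw [hsplit]
  refine IntegrableOn.union ?_ ?_
  · have hint : IntegrableOn (fun s : ℝ => s ^ (p - 1)) (Ioc 0 (t/2)) := by
      have h := intervalIntegral.intervalIntegrable_rpow' (a := 0) (b := t/2)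
        (show (-1:ℝ) < p - 1 by linarith)
      rwa [intervalIntegrable_iff_integrableOn_Ioc_of_le (by linarith)] at h
    refine Integrable.mono' ((hint.mul_const (max ((t/2) ^ (q - 1)) (t ^ (q - 1))))) 
      hmeas.aestronglyMeasurable ?_
    rw [ae_restrict_iff' measurableSet_Ioc]
    refine Filter.Eventually.of_forall fun s hs => ?_
    have hs0 : (0:ℝ) < s := hs.1
    have h1 : t / 2 ≤ t - s := by have := hs.2; linarith
    have h2 : t - s ≤ t := by linarith
    rw [Real.norm_eq_abs, abs_mul, abs_of_nonneg (Real.rpow_nonneg hs0.le _),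
      abs_of_nonneg (Real.rpow_nonneg (by linarith) _)]
    exact mul_le_mul_of_nonneg_left (rpow_le_max (by linarith) h1 h2 _)
      (Real.rpow_nonneg hs0.le _)
  · have hint : IntegrableOn (fun s : ℝ => (t - s) ^ (q - 1)) (Ioc (t/2) t) := by
      have h := intervalIntegral.intervalIntegrable_rpow' (a := 0) (b := t/2)
        (show (-1:ℝ) < q - 1 by linarith)
      have h2 := h.comp_sub_left t
      have h3 : IntervalIntegrable (fun x : ℝ => (t - x) ^ (q - 1)) volume (t/2) t := by
        have ha : t - (0:ℝ) = t := by ring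
        have hb : t - t/2 = t/2 := by ring
        rw [ha, hb] at h2
        exact h2.symm
      rwa [intervalIntegrable_iff_integrableOn_Ioc_of_le (by linarith)] at h3
    refine Integrable.mono' (hint.const_mul (max ((t/2) ^ (p - 1)) (t ^ (p - 1))))
      hmeas.aestronglyMeasurable ?_
    rw [ae_restrict_iff' measurableSet_Ioc]
    refine Filter.Eventually.of_forall fun s hs => ?_
    have hs1 : t/2 < s := hs.1
    have hs2 : s ≤ t := hs.2
    rw [Real.norm_eq_abs, abs_mul, abs_of_nonneg (Real.rpow_nonneg (by linarith) _),
      abs_of_nonneg (Real.rpow_nonneg (by linarith : (0:ℝ) ≤ t - s) _)]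
    exact mul_le_mul_of_nonneg_right (rpow_le_max (by linarith) hs1.le hs2 _)
      (Real.rpow_nonneg (by linarith) _)


theorem H_abs_le (ρ lam b : ℝ) (hρ : 0 < ρ) {s t : ℝ} (hs : 0 < s) (hst : s ≤ t) :
    |H ρ lam b s| ≤
      (∑' j : ℕ, (ρ * j + |b| + 1) * (|lam| * t ^ ρ) ^ j * |(Real.Gamma (ρ * j + b))⁻¹|)
        * s ^ (b - 1) := by
  have ht : (0:ℝ) < t := lt_of_lt_of_le hs hst
  set r := |lam| * t ^ ρ with hrdef
  have hw := summable_weight ρ b r hρ (by positivity)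
  have hsum := summable_H ρ lam b hρ hs
  have h1 : |H ρ lam b s| ≤
      ∑' j : ℕ, |lam ^ j * s ^ (ρ * j + b - 1) * (Real.Gamma (ρ * j + b))⁻¹| := by
    simpa only [Real.norm_eq_abs, H] using norm_tsum_le_tsum_norm (f := fun j : ℕ =>
      lam ^ j * s ^ (ρ * j + b - 1) * (Real.Gamma (ρ * j + b))⁻¹) (by
        simpa only [Real.norm_eq_abs] using hsum.abs)
  refine h1.trans ?_
  have h2 : ∀ j : ℕ, |lam ^ j * s ^ (ρ * j + b - 1) * (Real.Gamma (ρ * j + b))⁻¹|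
      ≤ ((ρ * j + |b| + 1) * r ^ j * |(Real.Gamma (ρ * j + b))⁻¹|) * s ^ (b - 1) := by
    intro j
    rw [abs_mul, abs_mul, abs_pow, abs_of_nonneg (Real.rpow_nonneg hs.le _)]
    have hx : s ^ (ρ * (j:ℝ) + b - 1) = s ^ (ρ * (j:ℝ)) * s ^ (b - 1) := by
      rw [← Real.rpow_add hs]; ring_nf
    have hxx : s ^ (ρ * (j:ℝ)) ≤ (t ^ ρ) ^ j := by
      rw [← Real.rpow_natCast (t ^ ρ) j, ← Real.rpow_mul ht.le]
      exact Real.rpow_le_rpow hs.le hst (by positivity)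
    have hco : (1:ℝ) ≤ ρ * j + |b| + 1 := by
      have h3 : (0:ℝ) ≤ ρ * j := by positivity
      have h4 := abs_nonneg b
      linarith
    calc |lam| ^ j * s ^ (ρ * (j:ℝ) + b - 1) * |(Real.Gamma (ρ * j + b))⁻¹|
        = (|lam| ^ j * s ^ (ρ * (j:ℝ))) * |(Real.Gamma (ρ * j + b))⁻¹| * s ^ (b - 1) := by
          rw [hx]; ring
      _ ≤ (|lam| ^ j * (t ^ ρ) ^ j) * |(Real.Gamma (ρ * j + b))⁻¹| * s ^ (b - 1) := by
          refine mul_le_mul_of_nonneg_right (mul_le_mul_of_nonneg_right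
            (mul_le_mul_of_nonneg_left hxx (by positivity)) (abs_nonneg _))
            (Real.rpow_nonneg hs.le _)
      _ = (1 * r ^ j * |(Real.Gamma (ρ * j + b))⁻¹|) * s ^ (b - 1) := by
          rw [hrdef, mul_pow]; ring
      _ ≤ ((ρ * j + |b| + 1) * r ^ j * |(Real.Gamma (ρ * j + b))⁻¹|) * s ^ (b - 1) := by
          refine mul_le_mul_of_nonneg_right (mul_le_mul_of_nonneg_right
            (mul_le_mul_of_nonneg_right hco (by positivity)) (abs_nonneg _))
            (Real.rpow_nonneg hs.le _)
  calc (∑' j : ℕ, |lam ^ j * s ^ (ρ * j + b - 1) * (Real.Gamma (ρ * j + b))⁻¹|)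
      ≤ ∑' j : ℕ, ((ρ * j + |b| + 1) * r ^ j * |(Real.Gamma (ρ * j + b))⁻¹|) * s ^ (b - 1) := by
        refine Summable.tsum_le_tsum h2 ?_ (hw.mul_right _)
        simpa only [Real.norm_eq_abs] using hsum.abs
    _ = (∑' j : ℕ, (ρ * j + |b| + 1) * r ^ j * |(Real.Gamma (ρ * j + b))⁻¹|) * s ^ (b - 1) := by
        rw [tsum_mul_right]

theorem H_integrableOn (ρ lam b μ' : ℝ) (hρ : 0 < ρ) (hb : 0 < b) (hμ : 0 < μ')
    {t : ℝ} (ht : 0 < t) :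
    IntegrableOn (fun s : ℝ => H ρ lam b s * (t - s) ^ (μ' - 1)) (Ioc 0 t) := by
  set W := ∑' j : ℕ, (ρ * j + |b| + 1) * (|lam| * t ^ ρ) ^ j * |(Real.Gamma (ρ * j + b))⁻¹|
    with hWdef
  have hmeasH : AEStronglyMeasurable (H ρ lam b) (volume.restrict (Ioc 0 t)) := by
    have hc : ContinuousOn (H ρ lam b) (Ioc 0 t) := fun s hs =>
      ((hasDerivAt_H ρ lam b hρ hs.1).continuousAt).continuousWithinAt
    exact hc.aestronglyMeasurable measurableSet_Ioc
  have hmeasX : AEStronglyMeasurable (fun s : ℝ => (t - s) ^ (μ' - 1))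
      (volume.restrict (Ioc 0 t)) := by
    have : Measurable (fun s : ℝ => (t - s) ^ (μ' - 1)) := by fun_prop
    exact this.aestronglyMeasurable
  refine Integrable.mono' (((beta_integrableOn hb hμ ht).const_mul W)) (hmeasH.mul hmeasX) ?_
  rw [ae_restrict_iff' measurableSet_Ioc]
  refine Filter.Eventually.of_forall fun s hs => ?_
  have hs0 : (0:ℝ) < s := hs.1
  have hts : (0:ℝ) ≤ t - s := by have := hs.2; linarith
  rw [Real.norm_eq_abs, abs_mul, abs_of_nonneg (Real.rpow_nonneg hts _)]
  calc |H ρ lam b s| * (t - s) ^ (μ' - 1)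
      ≤ (W * s ^ (b - 1)) * (t - s) ^ (μ' - 1) :=
        mul_le_mul_of_nonneg_right (H_abs_le ρ lam b hρ hs0 hs.2) (Real.rpow_nonneg hts _)
    _ = W * (s ^ (b - 1) * (t - s) ^ (μ' - 1)) := by ring

theorem frac_integral_H (ρ lam b μ' : ℝ) (hρ : 0 < ρ) (hb : 0 < b) (hμ : 0 < μ')
    {t : ℝ} (ht : 0 < t) :
    ∫ s in (0:ℝ)..t, H ρ lam b s * (t - s) ^ (μ' - 1)
      = Real.Gamma μ' * H ρ lam (b + μ') t := by
  have hrw : ∀ s : ℝ, H ρ lam b s * (t - s) ^ (μ' - 1)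
      = ∑' j : ℕ, lam ^ j * (Real.Gamma (ρ * j + b))⁻¹ * (s ^ (ρ * j + b - 1) * (t - s) ^ (μ' - 1)) := by
    intro s
    rw [H, ← tsum_mul_right]
    exact tsum_congr fun j => by ring
  have hargpos : ∀ j : ℕ, 0 < ρ * j + b := by
    intro j; positivity
  have hFint : ∀ j : ℕ, IntegrableOn (fun s : ℝ =>
      lam ^ j * (Real.Gamma (ρ * j + b))⁻¹ * (s ^ (ρ * j + b - 1) * (t - s) ^ (μ' - 1)))
      (Ioc 0 t) := by
    intro j
    have h := (beta_integrableOn (p := ρ * j + b) (hargpos j) hμ ht).const_mul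
      (lam ^ j * (Real.Gamma (ρ * j + b))⁻¹)
    simpa [mul_assoc, IntegrableOn] using h
  have hFval : ∀ j : ℕ, ∫ s in Ioc (0:ℝ) t,
      lam ^ j * (Real.Gamma (ρ * j + b))⁻¹ * (s ^ (ρ * j + b - 1) * (t - s) ^ (μ' - 1))
      = lam ^ j * (Real.Gamma (ρ * j + b))⁻¹ *
        (Real.Gamma (ρ * j + b) * Real.Gamma μ' * (Real.Gamma (ρ * j + b + μ'))⁻¹
          * t ^ (ρ * j + b + μ' - 1)) := by
    intro j
    rw [MeasureTheory.integral_const_mul, ← intervalIntegral.integral_of_le ht.le]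
    congr 1
    have h := beta_real (p := ρ * j + b) (q := μ') (hargpos j) hμ ht
    simpa using h
  have hGpos : ∀ j : ℕ, 0 < Real.Gamma (ρ * j + b) := fun j => Real.Gamma_pos_of_pos (hargpos j)
  have hnorm : ∀ j : ℕ, (∫ s in Ioc (0:ℝ) t,
      ‖lam ^ j * (Real.Gamma (ρ * j + b))⁻¹ * (s ^ (ρ * j + b - 1) * (t - s) ^ (μ' - 1))‖)
      = |lam| ^ j * (Real.Gamma (ρ * j + b))⁻¹ *
        (Real.Gamma (ρ * j + b) * Real.Gamma μ' * (Real.Gamma (ρ * j + b + μ'))⁻¹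
          * t ^ (ρ * j + b + μ' - 1)) := by
    intro j
    have hcongr : ∀ s ∈ Ioc (0:ℝ) t,
        ‖lam ^ j * (Real.Gamma (ρ * j + b))⁻¹ * (s ^ (ρ * j + b - 1) * (t - s) ^ (μ' - 1))‖
        = |lam| ^ j * (Real.Gamma (ρ * j + b))⁻¹ * (s ^ (ρ * j + b - 1) * (t - s) ^ (μ' - 1)) := by
      intro s hs
      have hs0 : (0:ℝ) < s := hs.1
      have hts : (0:ℝ) ≤ t - s := by have := hs.2; linarith
      rw [Real.norm_eq_abs, abs_mul, abs_mul, abs_pow, abs_of_pos (inv_pos.2 (hGpos j)),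
        abs_mul, abs_of_nonneg (Real.rpow_nonneg hs0.le _),
        abs_of_nonneg (Real.rpow_nonneg hts _)]
    rw [setIntegral_congr_fun measurableSet_Ioc hcongr, MeasureTheory.integral_const_mul,
      ← intervalIntegral.integral_of_le ht.le]
    congr 1
    simpa using beta_real (p := ρ * j + b) (q := μ') (hargpos j) hμ ht
  have hFsum : Summable (fun j : ℕ => ∫ s in Ioc (0:ℝ) t,
      ‖lam ^ j * (Real.Gamma (ρ * j + b))⁻¹ * (s ^ (ρ * j + b - 1) * (t - s) ^ (μ' - 1))‖) := by
    rw [show (fun j : ℕ => ∫ s in Ioc (0:ℝ) t,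
      ‖lam ^ j * (Real.Gamma (ρ * j + b))⁻¹ * (s ^ (ρ * j + b - 1) * (t - s) ^ (μ' - 1))‖)
      = fun j : ℕ => |lam| ^ j * (Real.Gamma (ρ * j + b))⁻¹ *
        (Real.Gamma (ρ * j + b) * Real.Gamma μ' * (Real.Gamma (ρ * j + b + μ'))⁻¹
          * t ^ (ρ * j + b + μ' - 1)) from funext hnorm]
    set r := |lam| * t ^ ρ with hrdef
    have hw := (summable_weight ρ (b + μ') r hρ (by positivity)).mul_left
      (Real.Gamma μ' * t ^ (b + μ' - 1))
    refine Summable.of_nonneg_of_le (fun j => ?_) (fun j => ?_) hw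
    · have := (hGpos j).le
      have h2 := Real.Gamma_pos_of_pos (show (0:ℝ) < ρ * j + b + μ' by positivity)
      positivity
    · have hGd : 0 < Real.Gamma (ρ * j + b + μ') :=
        Real.Gamma_pos_of_pos (by positivity)
    
      have hco : (1:ℝ) ≤ ρ * j + |b + μ'| + 1 := by
        have h3 : (0:ℝ) ≤ ρ * j := by positivity
        have h4 := abs_nonneg (b + μ')
        linarith
      have hpm : t ^ (ρ * (j:ℝ) + b + μ' - 1) = (t ^ ρ) ^ j * t ^ (b + μ' - 1) := by
        rw [show ρ * (j:ℝ) + b + μ' - 1 = ρ * j + (b + μ' - 1) by ring, Real.rpow_add ht,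
          Real.rpow_mul ht.le, Real.rpow_natCast]
      have habs : (Real.Gamma (ρ * j + (b + μ')))⁻¹ = |(Real.Gamma (ρ * j + (b + μ')))⁻¹| := by
        rw [abs_of_pos (inv_pos.2 (Real.Gamma_pos_of_pos (by positivity)))]
      calc |lam| ^ j * (Real.Gamma (ρ * j + b))⁻¹ *
            (Real.Gamma (ρ * j + b) * Real.Gamma μ' * (Real.Gamma (ρ * j + b + μ'))⁻¹
              * t ^ (ρ * j + b + μ' - 1))
          = (Real.Gamma μ' * t ^ (b + μ' - 1)) *
            (1 * (|lam| ^ j * (t ^ ρ) ^ j) * (Real.Gamma (ρ * j + (b + μ')))⁻¹) := by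
            rw [hpm, show ρ * (j:ℝ) + b + μ' = ρ * j + (b + μ') by ring]
            have hcc : (Real.Gamma (ρ * j + b))⁻¹ * Real.Gamma (ρ * j + b) = 1 :=
              inv_mul_cancel₀ (hGpos j).ne'
            linear_combination (|lam| ^ j * Real.Gamma μ' * (Real.Gamma (ρ * j + (b + μ')))⁻¹
              * ((t ^ ρ) ^ j * t ^ (b + μ' - 1))) * hcc
        _ ≤ (Real.Gamma μ' * t ^ (b + μ' - 1)) *
            ((ρ * j + |b + μ'| + 1) * r ^ j * |(Real.Gamma (ρ * j + (b + μ')))⁻¹|) := by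
            rw [hrdef, mul_pow, ← habs]
            have hnn : (0:ℝ) ≤ Real.Gamma μ' * t ^ (b + μ' - 1) := by
              have := (Real.Gamma_pos_of_pos hμ).le
              positivity
            refine mul_le_mul_of_nonneg_left ?_ hnn
            refine mul_le_mul_of_nonneg_right (mul_le_mul_of_nonneg_right hco ?_) ?_
            · positivity
            · exact (inv_pos.2 (Real.Gamma_pos_of_pos (by positivity))).le
  rw [intervalIntegral.integral_of_le ht.le]
  simp only [hrw]
  rw [← integral_tsum_of_summable_integral_norm hFint hFsum]
  have hterm : ∀ j : ℕ, (∫ s in Ioc (0:ℝ) t,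
      lam ^ j * (Real.Gamma (ρ * j + b))⁻¹ * (s ^ (ρ * j + b - 1) * (t - s) ^ (μ' - 1)))
      = Real.Gamma μ' * (lam ^ j * t ^ (ρ * j + (b + μ') - 1) * (Real.Gamma (ρ * j + (b + μ')))⁻¹) := by
    intro j
    rw [hFval j, show ρ * (j:ℝ) + b + μ' - 1 = ρ * j + (b + μ') - 1 by ring,
      show ρ * (j:ℝ) + b + μ' = ρ * j + (b + μ') by ring]
    have hcc : (Real.Gamma (ρ * j + b))⁻¹ * Real.Gamma (ρ * j + b) = 1 :=
      inv_mul_cancel₀ (hGpos j).ne'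
    linear_combination (lam ^ j * Real.Gamma μ' * (Real.Gamma (ρ * j + (b + μ')))⁻¹
      * t ^ (ρ * (j:ℝ) + (b + μ') - 1)) * hcc
  rw [show (fun j : ℕ => ∫ s in Ioc (0:ℝ) t,
      lam ^ j * (Real.Gamma (ρ * j + b))⁻¹ * (s ^ (ρ * j + b - 1) * (t - s) ^ (μ' - 1)))
      = fun j : ℕ => Real.Gamma μ' * (lam ^ j * t ^ (ρ * j + (b + μ') - 1)
        * (Real.Gamma (ρ * j + (b + μ')))⁻¹) from funext hterm]
  rw [tsum_mul_left, H]


theorem key (n : ℕ) (α lam : ℝ) (hn1 : 1 ≤ n) (hn : (n:ℝ) - 1 < α) (hα : α ≤ n)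
    (e₁ e₂ : ℕ → ℝ) (h : ℝ → ℝ)
    (hh : ∀ x : ℝ, h x =
      (∑ k ∈ Finset.Icc 1 n, e₁ k * x ^ (α - k) *
        mittagLeffler (2 * α) (1 + α - k) (lam * x ^ (2 * α)))
      + ∑ k ∈ Finset.Icc 1 n, e₂ k * x ^ (2 * α - k) *
        mittagLeffler (2 * α) (1 + 2 * α - k) (lam * x ^ (2 * α)))
    {t : ℝ} (ht : 0 < t) :
    rlDeriv n α h t =
      lam * (∑ k ∈ Finset.Icc 1 n, e₁ k * t ^ (2 * α - k) *
        mittagLeffler (2 * α) (1 + 2 * α - k) (lam * t ^ (2 * α)))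
      + ∑ k ∈ Finset.Icc 1 n, e₂ k * t ^ (α - k) *
        mittagLeffler (2 * α) (1 + α - k) (lam * t ^ (2 * α)) := by
  have hn1' : (1:ℝ) ≤ n := by exact_mod_cast hn1
  have hα0 : 0 < α := by linarith
  have hρ : 0 < 2 * α := by linarith
  set P : Finset (ℕ × Bool) := (Finset.Icc 1 n) ×ˢ (Finset.univ : Finset Bool) with hP
  set w : ℕ × Bool → ℝ := fun p => cond p.2 (e₁ p.1) (e₂ p.1) with hw
  set bf : ℕ × Bool → ℝ := fun p => cond p.2 (1 + α - p.1) (1 + 2*α - p.1) with hbf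
  have hbfpos : ∀ p ∈ P, 0 < bf p := by
    rintro ⟨k, i⟩ hp
    rw [hP, Finset.mem_product, Finset.mem_Icc] at hp
    have hk : (k:ℝ) ≤ n := by exact_mod_cast hp.1.2
    cases i
    · simp only [hbf, cond_false]; linarith
    · simp only [hbf, cond_true]; linarith
  have hrepr : ∀ x : ℝ, 0 < x → h x = ∑ p ∈ P, w p * H (2*α) lam (bf p) x := by
    intro x hx
    rw [hh x, hP, Finset.sum_product]
    simp only [hw, hbf, Fintype.sum_bool, cond_true, cond_false]
    rw [Finset.sum_add_distrib]
    congr 1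
    · refine Finset.sum_congr rfl fun k hk => ?_
      have hE := H_eq (2*α) lam (1 + α - k) hx
      rw [show (1 + α - (k:ℝ)) - 1 = α - k by ring] at hE
      rw [mul_assoc, hE]
    · refine Finset.sum_congr rfl fun k hk => ?_
      have hE := H_eq (2*α) lam (1 + 2*α - k) hx
      rw [show (1 + 2*α - (k:ℝ)) - 1 = 2*α - k by ring] at hE
      rw [mul_assoc, hE]
  have hK : ∀ x ∈ Ioi (0:ℝ), rlKernel n α h x
      = ∑ p ∈ P, w p * H (2*α) lam (bf p + ((n:ℝ) - α)) x := by
    intro x hx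
    rw [mem_Ioi] at hx
    by_cases hcase : α = (n:ℝ)
    · rw [rlKernel, if_pos hcase, hrepr x hx]
      refine Finset.sum_congr rfl fun p _ => ?_
      rw [show bf p + ((n:ℝ) - α) = bf p by rw [hcase]; ring]
    · have hμpos : 0 < (n:ℝ) - α := by
        have : α < n := lt_of_le_of_ne hα hcase
        linarith
      have hΓ : Real.Gamma ((n:ℝ) - α) ≠ 0 := (Real.Gamma_pos_of_pos hμpos).ne'
      simp only [rlKernel, if_neg hcase]
      have hint : ∀ p ∈ P, IntegrableOn (fun s : ℝ =>
          w p * (H (2*α) lam (bf p) s * (x - s) ^ ((n:ℝ) - α - 1))) (Ioc 0 x) :=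
        fun p hp => ((H_integrableOn (2*α) lam (bf p) ((n:ℝ) - α) hρ (hbfpos p hp)
          hμpos hx).const_mul (w p))
      have hIeq : (∫ s in (0:ℝ)..x, h s * (x - s) ^ ((n:ℝ) - α - 1))
          = ∑ p ∈ P, w p * (Real.Gamma ((n:ℝ) - α) * H (2*α) lam (bf p + ((n:ℝ) - α)) x) := by
        rw [intervalIntegral.integral_of_le hx.le]
        rw [setIntegral_congr_fun (g := fun s => ∑ p ∈ P,
          w p * (H (2*α) lam (bf p) s * (x - s) ^ ((n:ℝ) - α - 1))) measurableSet_Ioc ?_]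
        · rw [MeasureTheory.integral_finset_sum _ (fun p hp => hint p hp)]
          refine Finset.sum_congr rfl fun p hp => ?_
          rw [MeasureTheory.integral_const_mul, ← intervalIntegral.integral_of_le hx.le,
            frac_integral_H (2*α) lam (bf p) ((n:ℝ) - α) hρ (hbfpos p hp) hμpos hx]
        · intro s hs
          show h s * (x - s) ^ ((n:ℝ) - α - 1)
            = ∑ p ∈ P, w p * (H (2*α) lam (bf p) s * (x - s) ^ ((n:ℝ) - α - 1))
          rw [hrepr s hs.1, Finset.sum_mul]
          exact Finset.sum_congr rfl fun p _ => by ring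
      rw [hIeq, Finset.mul_sum]
      refine Finset.sum_congr rfl fun p hp => ?_
      have hcc : (Real.Gamma ((n:ℝ) - α))⁻¹ * Real.Gamma ((n:ℝ) - α) = 1 := inv_mul_cancel₀ hΓ
      linear_combination (w p * H (2*α) lam (bf p + ((n:ℝ) - α)) x) * hcc
  have hstep : rlDeriv n α h t = ∑ p ∈ P, w p * H (2*α) lam (bf p + ((n:ℝ) - α) - n) t := by
    rw [rlDeriv]
    have hev : rlKernel n α h =ᶠ[nhds t]
        (fun x => ∑ p ∈ P, w p * H (2*α) lam (bf p + ((n:ℝ) - α)) x) := by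
      filter_upwards [isOpen_Ioi.mem_nhds (mem_Ioi.2 ht)] with x hx
      exact hK x hx
    rw [(eventuallyEq_iteratedDeriv hev n).eq_of_nhds]
    exact iteratedDeriv_combo P w (2*α) lam hρ n (fun p => bf p + ((n:ℝ) - α)) t ht
  rw [hstep, hP, Finset.sum_product]
  simp only [hw, hbf, Fintype.sum_bool, cond_true, cond_false]
  rw [Finset.sum_add_distrib]
  congr 1
  · rw [Finset.mul_sum]
    refine Finset.sum_congr rfl fun k hk => ?_
    have hk1 : 1 ≤ k := (Finset.mem_Icc.1 hk).1
    rw [show (1 + α - (k:ℝ)) + ((n:ℝ) - α) - n = 1 - k by ring,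
      H_shift (2*α) lam hρ k hk1 ht]
    have hE := H_eq (2*α) lam (1 + 2*α - k) ht
    rw [show (1 + 2*α - (k:ℝ)) - 1 = 2*α - k by ring] at hE
    rw [← hE]
    ring
  · refine Finset.sum_congr rfl fun k hk => ?_
    rw [show (1 + 2*α - (k:ℝ)) + ((n:ℝ) - α) - n = 1 + α - k by ring]
    have hE := H_eq (2*α) lam (1 + α - k) ht
    rw [show (1 + α - (k:ℝ)) - 1 = α - k by ring] at hE
    rw [← hE]
    ring

end MLaux

/-- The Mittag–Leffler pair `(φ, ψ)` solves the reduced system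
`dᵅφ/dtᵅ = a ψ`, `dᵅψ/dtᵅ = (a + λ₂) φ` obtained from the subalgebra `W₃`. -/
theorem mittagLeffler_solves_W3_reduced_system
    (n : ℕ) (α : ℝ) (hn : (n : ℝ) - 1 < α) (hα : α ≤ n)
    (a lam₂ : ℝ) (lam : ℝ) (hlam : lam = a * (a + lam₂))
    (c₁ c₂ : ℕ → ℝ) (φ ψ : ℝ → ℝ)
    (hφ : ∀ t, φ t =
      (∑ k ∈ Finset.Icc 1 n, c₁ k * t ^ (α - k) *
        mittagLeffler (2 * α) (1 + α - k) (lam * t ^ (2 * α)))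
      + a * ∑ k ∈ Finset.Icc 1 n, c₂ k * t ^ (2 * α - k) *
        mittagLeffler (2 * α) (1 + 2 * α - k) (lam * t ^ (2 * α)))
    (hψ : ∀ t, ψ t =
      (a + lam₂) * (∑ k ∈ Finset.Icc 1 n, c₁ k * t ^ (2 * α - k) *
        mittagLeffler (2 * α) (1 + 2 * α - k) (lam * t ^ (2 * α)))
      + ∑ k ∈ Finset.Icc 1 n, c₂ k * t ^ (α - k) *
        mittagLeffler (2 * α) (1 + α - k) (lam * t ^ (2 * α))) :
    ∀ t ∈ Set.Ioi (0:ℝ),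
      rlDeriv n α φ t = a * ψ t ∧ rlDeriv n α ψ t = (a + lam₂) * φ t := by
  intro t ht
  rw [Set.mem_Ioi] at ht
  rcases Nat.eq_zero_or_pos n with hn0 | hn1
  · subst hn0
    have hempty : Finset.Icc 1 0 = (∅ : Finset ℕ) := by decide
    have hφ0 : ∀ x, φ x = 0 := by intro x; rw [hφ x, hempty]; simp
    have hψ0 : ∀ x, ψ x = 0 := by intro x; rw [hψ x, hempty]; simp
    have hker : ∀ g : ℝ → ℝ, (∀ x, g x = 0) → rlDeriv 0 α g t = 0 := by
      intro g hg
      rw [rlDeriv, iteratedDeriv_zero, rlKernel]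
      split_ifs with hcase
      · exact hg t
      · simp [hg]
    rw [hker φ hφ0, hker ψ hψ0, hφ0, hψ0]
    simp
  · constructor
    · have hh : ∀ x : ℝ, φ x =
          (∑ k ∈ Finset.Icc 1 n, c₁ k * x ^ (α - k) *
            mittagLeffler (2 * α) (1 + α - k) (lam * x ^ (2 * α)))
          + ∑ k ∈ Finset.Icc 1 n, (fun k => a * c₂ k) k * x ^ (2 * α - k) *
            mittagLeffler (2 * α) (1 + 2 * α - k) (lam * x ^ (2 * α)) := by
        intro x
        rw [hφ x, Finset.mul_sum]
        congr 1
        exact Finset.sum_congr rfl fun k _ => by ring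
      rw [MLaux.key n α lam hn1 hn hα c₁ (fun k => a * c₂ k) φ hh ht, hψ t]
      have hsum2 : (∑ k ∈ Finset.Icc 1 n, (fun k => a * c₂ k) k * t ^ (α - k) *
            mittagLeffler (2 * α) (1 + α - k) (lam * t ^ (2 * α)))
          = a * ∑ k ∈ Finset.Icc 1 n, c₂ k * t ^ (α - k) *
            mittagLeffler (2 * α) (1 + α - k) (lam * t ^ (2 * α)) := by
        rw [Finset.mul_sum]
        exact Finset.sum_congr rfl fun k _ => by ring
      rw [hsum2, hlam]
      ring
    · have hh : ∀ x : ℝ, ψ x =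
          (∑ k ∈ Finset.Icc 1 n, c₂ k * x ^ (α - k) *
            mittagLeffler (2 * α) (1 + α - k) (lam * x ^ (2 * α)))
          + ∑ k ∈ Finset.Icc 1 n, (fun k => (a + lam₂) * c₁ k) k * x ^ (2 * α - k) *
            mittagLeffler (2 * α) (1 + 2 * α - k) (lam * x ^ (2 * α)) := by
        intro x
        rw [hψ x, Finset.mul_sum, add_comm]
        congr 1
        exact Finset.sum_congr rfl fun k _ => by ring
      rw [MLaux.key n α lam hn1 hn hα c₂ (fun k => (a + lam₂) * c₁ k) ψ hh ht, hφ t]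
      have hsum2 : (∑ k ∈ Finset.Icc 1 n, (fun k => (a + lam₂) * c₁ k) k * t ^ (α - k) *
            mittagLeffler (2 * α) (1 + α - k) (lam * t ^ (2 * α)))
          = (a + lam₂) * ∑ k ∈ Finset.Icc 1 n, c₁ k * t ^ (α - k) *
            mittagLeffler (2 * α) (1 + α - k) (lam * t ^ (2 * α)) := by
        rw [Finset.mul_sum]
        exact Finset.sum_congr rfl fun k _ => by ring
      rw [hsum2, hlam]
      ring
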